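/- Suppose ρ_Y is finite and is a metric on Y. Then any two points x, y ∈ Y can be joined by a shortest curve γ : [0,L] → Y with γ(0) = x, γ(L) = y, L = ρ_Y(x,y), and ρ_Y(γ(s), γ(t)) = t − s for all 0 ≤ s < t ≤ L. In particular, (Y, ρ_Y) is a geodesic (intrinsic) metric space. -/

import Mathlib

open Set Filter Topology ENNReal Manifold

/-- The infimum of Riemannian lengths of smooth paths joining `x` and `y` inside `S ⊆ X`.
Here the distance of the metric space `X` is the Riemannian distance of `(X,g)`, so that
the length of a path is its total (e-)variation. -/
noncomputable def infSmoothLengthM (n : ℕ) {X : Type*} [MetricSpace X]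
    [ChartedSpace (EuclideanSpace ℝ (Fin n)) X] (S : Set X) (x y : X) : ℝ≥0∞ :=
  sInf { L : ℝ≥0∞ | ∃ γ : ℝ → X, ContMDiff (𝓘(ℝ, ℝ)) (𝓡 n) (⊤ : ℕ∞) γ ∧
      γ 0 = x ∧ γ 1 = y ∧ (∀ t ∈ Icc (0:ℝ) 1, γ t ∈ S) ∧
      L = eVariationOn γ (Icc (0:ℝ) 1) }

noncomputable def rhoYM (n : ℕ) {X : Type*} [MetricSpace X]
    [ChartedSpace (EuclideanSpace ℝ (Fin n)) X] (Y : Set X) (x y : X) : ℝ≥0∞ :=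
  Filter.liminf (fun p : X × X => infSmoothLengthM n (interior Y) p.1 p.2)
    ((𝓝 x ⊓ 𝓟 (interior Y)) ×ˢ (𝓝 y ⊓ 𝓟 (interior Y)))

def IsC0SubmanifoldWithBoundary (n : ℕ) {X : Type*} [TopologicalSpace X] (Y : Set X) : Prop :=
  IsCompact Y ∧ IsConnected Y ∧ (frontier Y).Nonempty ∧
  ∀ y ∈ Y, ∃ U : Set X, IsOpen U ∧ y ∈ U ∧
    ∃ V : Set {x : EuclideanSpace ℝ (Fin n) // ∀ i : Fin n, (i : ℕ) = 0 → 0 ≤ x i},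
      IsOpen V ∧ Nonempty (↥(U ∩ Y) ≃ₜ ↥V)

section VarCont

variable {E : Type*} [PseudoEMetricSpace E]

/-- Key partition-splitting estimate: any partition sum over `Icc t u` is bounded by the
oscillation of `f` near `t` plus the sup of variations on subintervals `[w,u]` with `w > t`. -/
lemma my_sum_split (f : ℝ → E) {t u : ℝ} (N : ℕ) (p : ℕ → ℝ)
    (hp : Monotone p) (hmem : ∀ i, p i ∈ Icc t u) :
    ∑ i ∈ Finset.range N, edist (f (p (i + 1))) (f (p i)) ≤
      (⨆ r ∈ Icc t u, edist (f r) (f t)) + ⨆ w ∈ Ioc t u, eVariationOn f (Icc w u) := by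
  by_cases hall : ∀ i, p i = t
  · have : ∀ i ∈ Finset.range N, edist (f (p (i + 1))) (f (p i)) = 0 := by
      intro i _; rw [hall (i + 1), hall i, edist_self]
    rw [Finset.sum_eq_zero this]
    exact zero_le
  · push_neg at hall
    have hexj : ∃ j, p j ≠ t := hall
    classical
    set j := Nat.find hexj with hjdef
    have hj : p j ≠ t := Nat.find_spec hexj
    have hjt : t < p j := lt_of_le_of_ne (hmem j).1 (Ne.symm hj)
    have hlt : ∀ i, i < j → p i = t := fun i hi => not_not.mp (Nat.find_min hexj hi)
    set m := min j N with hm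
    have hmN : m ≤ N := min_le_right _ _
    have hmj : m ≤ j := min_le_left _ _
    rw [Finset.range_eq_Ico, ← Finset.sum_Ico_consecutive _ (Nat.zero_le m) hmN]
    have h1 : ∑ i ∈ Finset.Ico 0 m, edist (f (p (i + 1))) (f (p i)) ≤
        ⨆ r ∈ Icc t u, edist (f r) (f t) := by
      rcases Nat.eq_zero_or_pos m with h0 | h0
      · rw [h0]; simp
      · obtain ⟨k, hk⟩ := Nat.exists_eq_succ_of_ne_zero h0.ne'
        rw [hk, ← Finset.range_eq_Ico, Finset.sum_range_succ]
        have hz : ∑ i ∈ Finset.range k, edist (f (p (i + 1))) (f (p i)) = 0 := by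
          apply Finset.sum_eq_zero
          intro i hi
          rw [Finset.mem_range] at hi
          have hik : i + 1 < m := by omega
          rw [hlt i (by omega), hlt (i + 1) (by omega), edist_self]
        rw [hz, zero_add, hlt k (by omega)]
        exact le_iSup₂_of_le (p (k + 1)) (hmem _) le_rfl
    have h2 : ∑ i ∈ Finset.Ico m N, edist (f (p (i + 1))) (f (p i)) ≤
        ⨆ w ∈ Ioc t u, eVariationOn f (Icc w u) := by
      rcases lt_or_ge m j with hlt2 | hge
      · -- then m = N, sum is empty
        have : m = N := by omega
        rw [this]; simp
      · have hmj' : m = j := le_antisymm hmj hge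
        have hsum : ∑ i ∈ Finset.Ico m N, edist (f (p (i + 1))) (f (p i)) =
            ∑ i ∈ Finset.range (N - m), edist (f (p (m + i + 1))) (f (p (m + i))) := by
          rw [Finset.sum_Ico_eq_sum_range]
        rw [hsum]
        have hq : Monotone (fun i => p (m + i)) := fun a b hab => hp (by omega)
        have hqmem : ∀ i, p (m + i) ∈ Icc (p j) u := by
          intro i
          exact ⟨hp (by omega), (hmem _).2⟩
        have := eVariationOn.sum_le (f := f) (n := N - m) hq hqmem
        refine le_trans (le_of_eq ?_) (le_trans this ?_)
        · rfl
        · exact le_iSup₂_of_le (p j) ⟨hjt, (hmem j).2⟩ le_rfl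
    exact add_le_add h1 h2

/-- No jump from the right of the variation of a continuous function. -/
lemma my_exists_right_small (f : ℝ → E) (hf : Continuous f) {t u₀ : ℝ} (h : t < u₀)
    (hfin : eVariationOn f (Icc t u₀) ≠ ⊤) {ε : ℝ≥0∞} (hε : 0 < ε) :
    ∃ r ∈ Ioc t u₀, eVariationOn f (Icc t r) ≤ ε := by
  set c := ⨅ r ∈ Ioc t u₀, eVariationOn f (Icc t r) with hc
  have hcfin : c ≠ ⊤ := by
    refine ne_top_of_le_ne_top hfin ?_
    exact iInf₂_le u₀ ⟨h, le_rfl⟩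
  have stepA : ∀ u ∈ Ioc t u₀, c ≤ ⨆ r ∈ Icc t u, edist (f r) (f t) := by
    intro u hu
    have hsub : Icc t u ⊆ Icc t u₀ := Icc_subset_Icc le_rfl hu.2
    have hvu : eVariationOn f (Icc t u) ≠ ⊤ :=
      ne_top_of_le_ne_top hfin (eVariationOn.mono f hsub)
    have key : eVariationOn f (Icc t u) ≤
        (⨆ r ∈ Icc t u, edist (f r) (f t)) + ⨆ w ∈ Ioc t u, eVariationOn f (Icc w u) := by
      rw [eVariationOn]
      refine iSup_le ?_
      rintro ⟨N, p, hp, hmemp⟩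
      exact my_sum_split f N p hp hmemp
    have hsup : (⨆ w ∈ Ioc t u, eVariationOn f (Icc w u)) ≤ eVariationOn f (Icc t u) - c := by
      refine iSup₂_le fun w hw => ?_
      have hadd : eVariationOn f (Icc t w) + eVariationOn f (Icc w u) = eVariationOn f (Icc t u) := by
        have := eVariationOn.Icc_add_Icc f (s := univ) hw.1.le hw.2 (mem_univ w)
        simpa using this
      have hftw : eVariationOn f (Icc t w) ≠ ⊤ :=
        ne_top_of_le_ne_top hvu (le_trans le_self_add hadd.le)
      have hcw : c ≤ eVariationOn f (Icc t w) :=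
        iInf₂_le w ⟨hw.1, hw.2.trans hu.2⟩
      have heq : eVariationOn f (Icc w u) = eVariationOn f (Icc t u) - eVariationOn f (Icc t w) := by
        rw [← hadd, ENNReal.add_sub_cancel_left hftw]
      rw [heq]
      exact tsub_le_tsub_left hcw _
    have hcu : c ≤ eVariationOn f (Icc t u) := iInf₂_le u hu
    have hfinal : eVariationOn f (Icc t u) + c ≤
        eVariationOn f (Icc t u) + ⨆ r ∈ Icc t u, edist (f r) (f t) := by
      calc eVariationOn f (Icc t u) + c
          ≤ ((⨆ r ∈ Icc t u, edist (f r) (f t)) + (eVariationOn f (Icc t u) - c)) + c :=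
            add_le_add_left (key.trans (add_le_add_right hsup _)) c
        _ = (⨆ r ∈ Icc t u, edist (f r) (f t)) + ((eVariationOn f (Icc t u) - c) + c) := by
            rw [add_assoc]
        _ = (⨆ r ∈ Icc t u, edist (f r) (f t)) + eVariationOn f (Icc t u) := by
            rw [tsub_add_cancel_of_le hcu]
        _ = eVariationOn f (Icc t u) + ⨆ r ∈ Icc t u, edist (f r) (f t) := add_comm _ _
    exact (ENNReal.add_le_add_iff_left hvu).mp hfinal
  have hc0 : c = 0 := by
    by_contra hne
    have hhalf : c / 2 < c := ENNReal.half_lt_self hne hcfin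
    have hcont : ∀ᶠ r in 𝓝 t, edist (f r) (f t) < c / 2 := by
      have := hf.continuousAt (x := t)
      exact EMetric.tendsto_nhds.mp this.tendsto (c / 2) (ENNReal.half_pos hne)
    rw [Metric.eventually_nhds_iff] at hcont
    obtain ⟨δ, hδpos, hδ⟩ := hcont
    set u := min u₀ (t + δ / 2) with hu
    have htu : t < u := lt_min h (by linarith)
    have huu₀ : u ≤ u₀ := min_le_left _ _
    have := stepA u ⟨htu, huu₀⟩
    have hosc : (⨆ r ∈ Icc t u, edist (f r) (f t)) ≤ c / 2 := by
      refine iSup₂_le fun r hr => ?_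
      refine le_of_lt (hδ ?_)
      rw [Real.dist_eq, abs_of_nonneg (by linarith [hr.1])]
      have : r ≤ t + δ / 2 := le_trans hr.2 (min_le_right _ _)
      linarith
    exact absurd (this.trans hosc) (not_le.mpr hhalf)
  have : c < ε := by rw [hc0]; exact hε
  rw [hc] at this
  obtain ⟨r, hr⟩ := iInf_lt_iff.mp this
  obtain ⟨hrm, hrlt⟩ := iInf_lt_iff.mp hr
  exact ⟨r, hrm, hrlt.le⟩

/-- No jump from the left: by reflection. -/
lemma my_exists_left_small (f : ℝ → E) (hf : Continuous f) {t₀ t : ℝ} (h : t₀ < t)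
    (hfin : eVariationOn f (Icc t₀ t) ≠ ⊤) {ε : ℝ≥0∞} (hε : 0 < ε) :
    ∃ r ∈ Ico t₀ t, eVariationOn f (Icc r t) ≤ ε := by
  set g : ℝ → E := f ∘ (fun r => -r) with hg
  have hvg : ∀ a b : ℝ, eVariationOn g (Icc a b) = eVariationOn f (Icc (-b) (-a)) := by
    intro a b
    have hanti : AntitoneOn (fun r : ℝ => -r) (Icc a b) := fun x _ y _ hxy => neg_le_neg hxy
    rw [hg, eVariationOn.comp_eq_of_antitoneOn f _ hanti]
    congr 1
    rw [show (fun r : ℝ => -r) = Neg.neg from rfl, Set.image_neg_eq_neg, Set.neg_Icc]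
  have hgc : Continuous g := hf.comp continuous_neg
  have hfin' : eVariationOn g (Icc (-t) (-t₀)) ≠ ⊤ := by
    rw [hvg]; simpa using hfin
  obtain ⟨r', hr', hvr'⟩ := my_exists_right_small g hgc (neg_lt_neg h) hfin' hε
  refine ⟨-r', ⟨?_, ?_⟩, ?_⟩
  · linarith [hr'.2]
  · linarith [hr'.1]
  · have : eVariationOn g (Icc (-t) r') = eVariationOn f (Icc (-r') t) := by
      rw [show r' = -(-r') from (neg_neg r').symm] at *
      rw [hvg]; simp
    rwa [this] at hvr'

/-- Continuity of the variation function of a continuous function of finite variation. -/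
lemma my_contOn_variation (f : ℝ → E) (hf : Continuous f)
    (hfin : eVariationOn f (Icc (0:ℝ) 1) ≠ ⊤) :
    ContinuousOn (fun u => (eVariationOn f (Icc (0:ℝ) u)).toReal) (Icc (0:ℝ) 1) := by
  have hfin_sub : ∀ a b : ℝ, 0 ≤ a → b ≤ 1 → eVariationOn f (Icc a b) ≠ ⊤ := by
    intro a b ha hb
    rcases le_or_gt a b with hab | hab
    · exact ne_top_of_le_ne_top hfin (eVariationOn.mono f (Icc_subset_Icc ha hb))
    · rw [Icc_eq_empty (not_le.mpr hab)]
      simp [eVariationOn.subsingleton f subsingleton_empty]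
  have hadd : ∀ a b : ℝ, 0 ≤ a → a ≤ b → b ≤ 1 →
      (eVariationOn f (Icc (0:ℝ) b)).toReal
        = (eVariationOn f (Icc (0:ℝ) a)).toReal + (eVariationOn f (Icc a b)).toReal := by
    intro a b ha hab hb
    have h := eVariationOn.Icc_add_Icc f (s := univ) ha hab (mem_univ a)
    simp only [univ_inter] at h
    rw [← h, ENNReal.toReal_add (hfin_sub 0 a (le_refl 0) (hab.trans hb)) (hfin_sub a b ha hb)]
  rw [Metric.continuousOn_iff]
  intro t ht ε hε
  have hεE : (0:ℝ≥0∞) < ENNReal.ofReal (ε / 2) := ENNReal.ofReal_pos.mpr (by linarith)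
  -- right bound
  have hR : ∃ δ > 0, ∀ u, t ≤ u → u ≤ 1 → u - t < δ → (eVariationOn f (Icc t u)).toReal < ε := by
    rcases lt_or_ge t 1 with h1 | h1
    · obtain ⟨r, hr, hvr⟩ := my_exists_right_small f hf h1 (hfin_sub t 1 ht.1 le_rfl) hεE
      refine ⟨r - t, by linarith [hr.1], fun u hu1 hu2 hu3 => ?_⟩
      have hle : eVariationOn f (Icc t u) ≤ eVariationOn f (Icc t r) :=
        eVariationOn.mono f (Icc_subset_Icc le_rfl (by linarith))
      have := ENNReal.toReal_mono ENNReal.ofReal_ne_top (hle.trans hvr)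
      rw [ENNReal.toReal_ofReal (by linarith)] at this
      linarith
    · refine ⟨1, one_pos, fun u hu1 hu2 hu3 => ?_⟩
      have : u = t := le_antisymm (hu2.trans h1) hu1
      rw [this, Icc_self]
      rw [eVariationOn.subsingleton f subsingleton_singleton]
      simpa using hε
  -- left bound
  have hL : ∃ δ > 0, ∀ u, 0 ≤ u → u ≤ t → t - u < δ → (eVariationOn f (Icc u t)).toReal < ε := by
    rcases lt_or_ge 0 t with h1 | h1
    · obtain ⟨r, hr, hvr⟩ := my_exists_left_small f hf h1 (hfin_sub 0 t le_rfl ht.2) hεE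
      refine ⟨t - r, by linarith [hr.2], fun u hu1 hu2 hu3 => ?_⟩
      have hle : eVariationOn f (Icc u t) ≤ eVariationOn f (Icc r t) :=
        eVariationOn.mono f (Icc_subset_Icc (by linarith) le_rfl)
      have := ENNReal.toReal_mono ENNReal.ofReal_ne_top (hle.trans hvr)
      rw [ENNReal.toReal_ofReal (by linarith)] at this
      linarith
    · refine ⟨1, one_pos, fun u hu1 hu2 hu3 => ?_⟩
      have : u = t := le_antisymm hu2 (h1.trans hu1)
      rw [this, Icc_self]
      rw [eVariationOn.subsingleton f subsingleton_singleton]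
      simpa using hε
  obtain ⟨δR, hδR, hRf⟩ := hR
  obtain ⟨δL, hδL, hLf⟩ := hL
  refine ⟨min δR δL, lt_min hδR hδL, fun u hu hdist => ?_⟩
  rw [Real.dist_eq] at hdist
  rcases le_total t u with htu | hut
  · have h1 : (eVariationOn f (Icc (0:ℝ) u)).toReal
        = (eVariationOn f (Icc (0:ℝ) t)).toReal + (eVariationOn f (Icc t u)).toReal :=
      hadd t u ht.1 htu hu.2
    rw [Real.dist_eq, h1]
    have h2 : (eVariationOn f (Icc t u)).toReal < ε := by
      apply hRf u htu hu.2
      have : |u - t| < δR := lt_of_lt_of_le hdist (min_le_left _ _)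
      rw [abs_of_nonneg (by linarith)] at this
      linarith
    have heq : (eVariationOn f (Icc (0:ℝ) t)).toReal + (eVariationOn f (Icc t u)).toReal
        - (eVariationOn f (Icc (0:ℝ) t)).toReal = (eVariationOn f (Icc t u)).toReal := by ring
    rw [heq, abs_of_nonneg ENNReal.toReal_nonneg]
    exact h2
  · have h1 : (eVariationOn f (Icc (0:ℝ) t)).toReal
        = (eVariationOn f (Icc (0:ℝ) u)).toReal + (eVariationOn f (Icc u t)).toReal :=
      hadd u t hu.1 hut ht.2
    rw [Real.dist_eq, h1]
    have h2 : (eVariationOn f (Icc u t)).toReal < ε := by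
      apply hLf u hu.1 hut
      have : |u - t| < δL := lt_of_lt_of_le hdist (min_le_right _ _)
      rw [abs_of_nonpos (by linarith)] at this
      linarith
    rw [show (eVariationOn f (Icc (0:ℝ) u)).toReal
        - ((eVariationOn f (Icc (0:ℝ) u)).toReal + (eVariationOn f (Icc u t)).toReal)
        = -(eVariationOn f (Icc u t)).toReal by ring, abs_neg,
      abs_of_nonneg (by positivity)]
    exact h2

end VarCont


section RhoHelpers

lemma my_infLength_ge_edist (n : ℕ) {X : Type*} [MetricSpace X]
    [ChartedSpace (EuclideanSpace ℝ (Fin n)) X] (S : Set X) (x y : X) :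
    edist x y ≤ infSmoothLengthM n S x y := by
  refine le_sInf ?_
  rintro L ⟨γ, -, h0, h1, -, rfl⟩
  rw [← h0, ← h1]
  exact eVariationOn.edist_le γ (s := Icc (0:ℝ) 1) (by constructor <;> norm_num)
    (by constructor <;> norm_num)

end RhoHelpers

/-- in the setting of the paper (smooth connected Riemannian `n`-manifold
`X` without boundary, `n ≥ 2`, and `Y ⊆ X` an `n`-dimensional compact connected
`C⁰`-submanifold with nonempty boundary), if `ρ_Y` is finite and is a metric on `Y`,
then any two points `x, y ∈ Y` can be joined in `Y` by a shortest curve (geodesic)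
`γ : [0,L] → Y` with `L = ρ_Y(x,y)`, `γ(0) = x`, `γ(L) = y`, and
`ρ_Y(γ(s),γ(t)) = t - s` for all `0 ≤ s < t ≤ L`. -/
theorem stmt2 {n : ℕ} (hn : 2 ≤ n) {X : Type*} [MetricSpace X]
    [ChartedSpace (EuclideanSpace ℝ (Fin n)) X]
    [IsManifold (𝓡 n) (⊤ : ℕ∞) X] [ConnectedSpace X]
    (Y : Set X) (hY : IsC0SubmanifoldWithBoundary n Y)
    (hfin : ∀ x ∈ Y, ∀ y ∈ Y, rhoYM n Y x y < ⊤)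
    (hzero : ∀ x ∈ Y, ∀ y ∈ Y, (rhoYM n Y x y = 0 ↔ x = y))
    (hsymm : ∀ x ∈ Y, ∀ y ∈ Y, rhoYM n Y x y = rhoYM n Y y x)
    (htri : ∀ x ∈ Y, ∀ y ∈ Y, ∀ z ∈ Y, rhoYM n Y x z ≤ rhoYM n Y x y + rhoYM n Y y z) :
    ∀ x ∈ Y, ∀ y ∈ Y, ∃ γ : ℝ → X,
      ContinuousOn γ (Icc 0 ((rhoYM n Y x y).toReal)) ∧
      (∀ t ∈ Icc (0:ℝ) ((rhoYM n Y x y).toReal), γ t ∈ Y) ∧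
      γ 0 = x ∧ γ ((rhoYM n Y x y).toReal) = y ∧
      ∀ s t : ℝ, 0 ≤ s → s < t → t ≤ (rhoYM n Y x y).toReal →
        rhoYM n Y (γ s) (γ t) = ENNReal.ofReal (t - s) := by
  intro x hx y hy
  by_cases hxy : x = y
  · subst hxy
    refine ⟨fun _ => x, continuousOn_const, fun _ _ => hx, rfl, rfl, ?_⟩
    intro s t hs hst ht
    exfalso
    have h0 : rhoYM n Y x x = 0 := (hzero x hx x hx).mpr rfl
    rw [h0, ENNReal.toReal_zero] at ht
    linarith
  · classical
    set I : Set X := interior Y with hI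
    set f : X × X → ℝ≥0∞ := fun p => infSmoothLengthM n I p.1 p.2 with hf
    set L : ℝ≥0∞ := rhoYM n Y x y with hLdef
    have hLfin : L ≠ ⊤ := (hfin x hx y hy).ne
    have hLpos : L ≠ 0 := fun h => hxy ((hzero x hx y hy).mp h)
    set Lr : ℝ := L.toReal with hLr
    have hLrpos : 0 < Lr := ENNReal.toReal_pos hLpos hLfin
    have hLofReal : ENNReal.ofReal Lr = L := ENNReal.ofReal_toReal hLfin
    set G : Filter (X × X) := (𝓝 x ⊓ 𝓟 I) ×ˢ (𝓝 y ⊓ 𝓟 I) with hG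
    have hLlim : L = Filter.liminf f G := rfl
    -- countable antitone basis of G
    obtain ⟨S, hS⟩ := G.exists_antitone_basis
    have hIIG : (I ×ˢ I) ∈ G :=
      prod_mem_prod (mem_inf_of_right (mem_principal_self I)) (mem_inf_of_right (mem_principal_self I))
    -- extraction of approximating pairs
    have hex : ∀ m : ℕ, ∃ p : X × X, p ∈ S m ∧ p ∈ I ×ˢ I ∧
        f p < L + ENNReal.ofReal (1 / (m + 1)) := by
      intro m
      by_contra hcon
      push_neg at hcon
      have hev : ∀ᶠ p in G, L + ENNReal.ofReal (1 / (m + 1)) ≤ f p := by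
        filter_upwards [hS.toHasBasis.mem_of_mem (trivial : True), hIIG] with p h1 h2
        exact hcon p h1 h2
      have hle : L + ENNReal.ofReal (1 / (m + 1)) ≤ Filter.liminf f G :=
        Filter.le_liminf_of_le (by isBoundedDefault) hev
      rw [← hLlim] at hle
      have : L < L + ENNReal.ofReal (1 / (m + 1)) :=
        ENNReal.lt_add_right hLfin (by positivity)
      exact absurd hle (not_le.mpr this)
    choose pm hpS hpII hpf using hex
    have hptend : Tendsto pm atTop G := hS.tendsto hpS
    have hxm_tend : Tendsto (fun m => (pm m).1) atTop (𝓝 x) :=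
      (tendsto_fst.comp hptend).mono_right inf_le_left
    have hym_tend : Tendsto (fun m => (pm m).2) atTop (𝓝 y) :=
      (tendsto_snd.comp hptend).mono_right inf_le_left
    -- curves
    have hcurve : ∀ m : ℕ, ∃ γ : ℝ → X, ContMDiff (𝓘(ℝ, ℝ)) (𝓡 n) (⊤ : ℕ∞) γ ∧
        γ 0 = (pm m).1 ∧ γ 1 = (pm m).2 ∧ (∀ t ∈ Icc (0:ℝ) 1, γ t ∈ I) ∧
        eVariationOn γ (Icc (0:ℝ) 1) < L + ENNReal.ofReal (1 / (m + 1)) := by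
      intro m
      have := hpf m
      rw [hf] at this
      obtain ⟨Lm, hLm_mem, hLm_lt⟩ := sInf_lt_iff.mp this
      obtain ⟨γ, hs, h0, h1, hmem, hvar⟩ := hLm_mem
      exact ⟨γ, hs, h0, h1, hmem, hvar ▸ hLm_lt⟩
    choose γm hsm h0m h1m hmemm hvarm using hcurve
    have hcont_m : ∀ m, Continuous (γm m) := fun m => (hsm m).continuous
    have hvfin : ∀ m, eVariationOn (γm m) (Icc (0:ℝ) 1) ≠ ⊤ := fun m => ne_top_of_lt (hvarm m)
    -- variation functions
    set w : ℕ → ℝ → ℝ := fun m u => (eVariationOn (γm m) (Icc (0:ℝ) u)).toReal with hw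
    have hvfin_sub : ∀ m, ∀ a b : ℝ, 0 ≤ a → b ≤ 1 → eVariationOn (γm m) (Icc a b) ≠ ⊤ := by
      intro m a b ha hb
      rcases le_or_gt a b with hab | hab
      · exact ne_top_of_le_ne_top (hvfin m) (eVariationOn.mono _ (Icc_subset_Icc ha hb))
      · rw [Icc_eq_empty (not_le.mpr hab)]
        simp [eVariationOn.subsingleton _ subsingleton_empty]
    have hw_cont : ∀ m, ContinuousOn (w m) (Icc (0:ℝ) 1) :=
      fun m => my_contOn_variation (γm m) (hcont_m m) (hvfin m)
    have hw0 : ∀ m, w m 0 = 0 := by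
      intro m
      rw [hw]
      simp only [Icc_self]
      rw [eVariationOn.subsingleton _ subsingleton_singleton]
      simp
    have hw_add : ∀ m, ∀ a b : ℝ, 0 ≤ a → a ≤ b → b ≤ 1 →
        w m b = w m a + (eVariationOn (γm m) (Icc a b)).toReal := by
      intro m a b ha hab hb
      have h := eVariationOn.Icc_add_Icc (γm m) (s := univ) ha hab (mem_univ a)
      simp only [univ_inter] at h
      rw [hw]
      simp only
      rw [← h, ENNReal.toReal_add (hvfin_sub m 0 a le_rfl (hab.trans hb)) (hvfin_sub m a b ha hb)]
    have hw_mono : ∀ m, ∀ a b : ℝ, 0 ≤ a → a ≤ b → b ≤ 1 → w m a ≤ w m b := by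
      intro m a b ha hab hb
      rw [hw_add m a b ha hab hb]
      have := ENNReal.toReal_nonneg (a := eVariationOn (γm m) (Icc a b))
      linarith
    set Vr : ℕ → ℝ := fun m => w m 1 with hVr
    have hVr_nonneg : ∀ m, 0 ≤ Vr m := fun m => ENNReal.toReal_nonneg
    -- clamp
    set cl : ℝ → ℝ := fun u => max 0 (min u 1) with hcl
    have hcl_mem : ∀ u, cl u ∈ Icc (0:ℝ) 1 := by
      intro u
      constructor
      · exact le_max_left _ _
      · rw [hcl]; simp
    have hcl_id : ∀ u ∈ Icc (0:ℝ) 1, cl u = u := by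
      intro u hu
      rw [hcl]
      simp only
      rw [min_eq_left hu.2, max_eq_right hu.1]
    have hcl_mono : Monotone cl := fun a b hab =>
      max_le_max le_rfl (min_le_min hab le_rfl)
    -- T: inverse arclength parametrization
    have hTset : ∀ m, ∀ u : ℝ, ∃ r, r ∈ {r : ℝ | r ∈ Icc (0:ℝ) 1 ∧ w m r = cl u * Vr m} := by
      intro m u
      have h1 : cl u * Vr m ∈ Icc (w m 0) (w m 1) := by
        rw [hw0 m]
        constructor
        · exact mul_nonneg (hcl_mem u).1 (hVr_nonneg m)
        · calc cl u * Vr m ≤ 1 * Vr m :=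
                mul_le_mul_of_nonneg_right (hcl_mem u).2 (hVr_nonneg m)
            _ = Vr m := one_mul _
      obtain ⟨r, hr, hre⟩ := intermediate_value_Icc zero_le_one (hw_cont m) h1
      exact ⟨r, hr, hre⟩
    have hTclosed : ∀ m, ∀ u : ℝ, IsClosed {r : ℝ | r ∈ Icc (0:ℝ) 1 ∧ w m r = cl u * Vr m} := by
      intro m u
      have : {r : ℝ | r ∈ Icc (0:ℝ) 1 ∧ w m r = cl u * Vr m}
          = Icc (0:ℝ) 1 ∩ (w m) ⁻¹' {cl u * Vr m} := by
        ext r; simp [Set.mem_inter_iff, Set.mem_preimage]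
      rw [this]
      exact (hw_cont m).preimage_isClosed_of_isClosed isClosed_Icc isClosed_singleton
    set T : ℕ → ℝ → ℝ := fun m u => sInf {r : ℝ | r ∈ Icc (0:ℝ) 1 ∧ w m r = cl u * Vr m} with hT
    have hT_bdd : ∀ m u, BddBelow {r : ℝ | r ∈ Icc (0:ℝ) 1 ∧ w m r = cl u * Vr m} :=
      fun m u => ⟨0, fun r hr => hr.1.1⟩
    have hT_spec : ∀ m u, T m u ∈ Icc (0:ℝ) 1 ∧ w m (T m u) = cl u * Vr m := by
      intro m u
      exact (hTclosed m u).csInf_mem (hTset m u) (hT_bdd m u)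
    have hT_mono : ∀ m, ∀ u v : ℝ, u ≤ v → T m u ≤ T m v := by
      intro m u v huv
      have hc : cl u * Vr m ≤ cl v * Vr m :=
        mul_le_mul_of_nonneg_right (hcl_mono huv) (hVr_nonneg m)
      have h1 : cl u * Vr m ∈ Icc (w m 0) (w m (T m v)) := by
        rw [hw0 m, (hT_spec m v).2]
        exact ⟨mul_nonneg (hcl_mem u).1 (hVr_nonneg m), hc⟩
      have hsub : Icc (0:ℝ) (T m v) ⊆ Icc (0:ℝ) 1 :=
        Icc_subset_Icc le_rfl (hT_spec m v).1.2
      obtain ⟨r, hr, hre⟩ := intermediate_value_Icc (hT_spec m v).1.1 ((hw_cont m).mono hsub) h1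
      calc T m u ≤ r := csInf_le (hT_bdd m u) ⟨⟨hr.1, hr.2.trans (hT_spec m v).1.2⟩, hre⟩
        _ ≤ T m v := hr.2
    set z : ℕ → ℝ → X := fun m u => γm m (T m u) with hz
    have hzI : ∀ m u, z m u ∈ I := fun m u => hmemm m _ (hT_spec m u).1
    have hzY : ∀ m u, z m u ∈ Y := fun m u => interior_subset (hzI m u)
    -- key variation computation
    have key_var : ∀ m, ∀ s t : ℝ, s ≤ t →
        eVariationOn (γm m) (Icc (T m s) (T m t)) = ENNReal.ofReal ((cl t - cl s) * Vr m) := by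
      intro m s t hst
      have hTs := hT_spec m s
      have hTt := hT_spec m t
      have hTst : T m s ≤ T m t := hT_mono m s t hst
      have hadd := hw_add m (T m s) (T m t) hTs.1.1 hTst hTt.1.2
      have htr : (eVariationOn (γm m) (Icc (T m s) (T m t))).toReal = (cl t - cl s) * Vr m := by
        rw [hTs.2, hTt.2] at hadd
        rw [sub_mul]
        linarith
      rw [← htr, ENNReal.ofReal_toReal (hvfin_sub m _ _ hTs.1.1 hTt.1.2)]
    -- endpoints
    have hz0 : ∀ m, z m 0 = (pm m).1 := by
      intro m
      have hT0 := hT_spec m 0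
      have hcl0 : cl (0:ℝ) = 0 := hcl_id 0 ⟨le_rfl, zero_le_one⟩
      have hvar0 : (eVariationOn (γm m) (Icc (0:ℝ) (T m 0))).toReal = 0 := by
        have := hw_add m 0 (T m 0) le_rfl hT0.1.1 hT0.1.2
        rw [hw0 m] at this
        rw [hT0.2, hcl0, zero_mul] at this
        linarith
      have hvar0' : eVariationOn (γm m) (Icc (0:ℝ) (T m 0)) = 0 := by
        have hne := hvfin_sub m 0 (T m 0) le_rfl hT0.1.2
        exact (ENNReal.toReal_eq_zero_iff _).mp hvar0 |>.resolve_right hne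
      have hedist : edist (γm m (T m 0)) (γm m 0) = 0 := by
        have := eVariationOn.edist_le (γm m) (s := Icc (0:ℝ) (T m 0))
          (x := T m 0) (y := 0) ⟨hT0.1.1, le_rfl⟩ ⟨le_rfl, hT0.1.1⟩
        rw [hvar0'] at this
        exact le_antisymm this zero_le
      rw [hz]
      simp only
      rw [edist_eq_zero.mp hedist, h0m m]
    have hz1 : ∀ m, z m 1 = (pm m).2 := by
      intro m
      have hT1 := hT_spec m 1
      have hcl1 : cl (1:ℝ) = 1 := hcl_id 1 ⟨zero_le_one, le_rfl⟩
      have hvar0 : (eVariationOn (γm m) (Icc (T m 1) 1)).toReal = 0 := by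
        have := hw_add m (T m 1) 1 hT1.1.1 hT1.1.2 le_rfl
        rw [hT1.2, hcl1, one_mul] at this
        rw [hVr] at this
        simp only at this
        linarith
      have hvar0' : eVariationOn (γm m) (Icc (T m 1) 1) = 0 := by
        have hne := hvfin_sub m (T m 1) 1 hT1.1.1 le_rfl
        exact (ENNReal.toReal_eq_zero_iff _).mp hvar0 |>.resolve_right hne
      have hedist : edist (γm m (T m 1)) (γm m 1) = 0 := by
        have := eVariationOn.edist_le (γm m) (s := Icc (T m 1) 1)
          (x := T m 1) (y := 1) ⟨le_rfl, hT1.1.2⟩ ⟨hT1.1.2, le_rfl⟩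
        rw [hvar0'] at this
        exact le_antisymm this zero_le
      rw [hz]
      simp only
      rw [edist_eq_zero.mp hedist, h1m m]
    -- rho unfolding
    have hrho_eq : ∀ a b : X, rhoYM n Y a b
        = Filter.liminf f ((𝓝 a ⊓ 𝓟 I) ×ˢ (𝓝 b ⊓ 𝓟 I)) := fun a b => rfl
    -- ultrafilter limits
    set 𝒰 : Ultrafilter ℕ := Ultrafilter.of Filter.cofinite with hUdef
    have hUatTop : (𝒰 : Filter ℕ) ≤ atTop := by
      rw [← Nat.cofinite_eq_atTop]
      exact Ultrafilter.of_le _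
    have hlim : ∀ u : ℝ, ∃ q ∈ Y, Tendsto (fun m => z m u) 𝒰 (𝓝 q) := by
      intro u
      obtain ⟨q, hqY, hq⟩ := hY.1.ultrafilter_le_nhds (Ultrafilter.map (fun m => z m u) 𝒰)
        (le_principal_iff.mpr (Ultrafilter.mem_map.mpr (Filter.univ_mem' (fun m => hzY m u))))
      refine ⟨q, hqY, ?_⟩
      rwa [Ultrafilter.coe_map] at hq
    choose γ0 hγ0Y hγ0t using hlim
    have hγ00 : γ0 0 = x := by
      refine tendsto_nhds_unique (hγ0t 0) ?_
      have h1 : Tendsto (fun m => (pm m).1) 𝒰 (𝓝 x) := hxm_tend.mono_left hUatTop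
      exact Tendsto.congr (fun m => (hz0 m).symm) h1
    have hγ01 : γ0 1 = y := by
      refine tendsto_nhds_unique (hγ0t 1) ?_
      have h1 : Tendsto (fun m => (pm m).2) 𝒰 (𝓝 y) := hym_tend.mono_left hUatTop
      exact Tendsto.congr (fun m => (hz1 m).symm) h1
    have pairt : ∀ s t : ℝ, Tendsto (fun m => (z m s, z m t)) 𝒰
        ((𝓝 (γ0 s) ⊓ 𝓟 I) ×ˢ (𝓝 (γ0 t) ⊓ 𝓟 I)) := by
      intro s t
      refine Tendsto.prodMk ?_ ?_
      · exact tendsto_inf.mpr ⟨hγ0t s,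
          tendsto_principal.mpr (Filter.Eventually.of_forall (fun m => hzI m s))⟩
      · exact tendsto_inf.mpr ⟨hγ0t t,
          tendsto_principal.mpr (Filter.Eventually.of_forall (fun m => hzI m t))⟩
    -- upper bound
    have upper : ∀ s t : ℝ, s ∈ Icc (0:ℝ) 1 → t ∈ Icc (0:ℝ) 1 → s ≤ t →
        rhoYM n Y (γ0 s) (γ0 t) ≤ ENNReal.ofReal (t - s) * L := by
      intro s t hs ht hst
      apply ENNReal.le_of_forall_pos_le_add
      intro ε hε hB
      rw [hrho_eq]
      apply Filter.liminf_le_of_frequently_le'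
      have hev : ∀ᶠ m in (𝒰 : Filter ℕ),
          f (z m s, z m t) ≤ ENNReal.ofReal (t - s) * L + ε := by
        have h2 : Tendsto (fun m : ℕ => ENNReal.ofReal (1 / (m + 1))) atTop (𝓝 0) := by
          rw [← ENNReal.ofReal_zero]
          exact ENNReal.tendsto_ofReal tendsto_one_div_add_atTop_nhds_zero_nat
        have h1 : ∀ᶠ m : ℕ in atTop, ENNReal.ofReal (1 / (m + 1)) < (ε : ℝ≥0∞) :=
          h2.eventually_lt_const (ENNReal.coe_pos.mpr hε)
        filter_upwards [hUatTop h1] with m hm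
        have hTst : T m s ≤ T m t := hT_mono m s t hst
        have hTs := hT_spec m s
        have hTt := hT_spec m t
        set a := T m s with ha
        set b := T m t with hb
        set aff : ℝ → ℝ := fun r => a + r * (b - a) with haff
        have haffmem : ∀ r ∈ Icc (0:ℝ) 1, aff r ∈ Icc a b := by
          intro r hr
          constructor
          · have : 0 ≤ r * (b - a) := mul_nonneg hr.1 (by linarith)
            simp only [haff]; linarith
          · have : r * (b - a) ≤ 1 * (b - a) :=
              mul_le_mul_of_nonneg_right hr.2 (by linarith)
            simp only [haff]; linarith
        have haffIcc : ∀ r ∈ Icc (0:ℝ) 1, aff r ∈ Icc (0:ℝ) 1 := by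
          intro r hr
          have := haffmem r hr
          exact ⟨le_trans hTs.1.1 this.1, le_trans this.2 hTt.1.2⟩
        have haffsmooth : ContMDiff (𝓘(ℝ, ℝ)) (𝓡 n) (⊤ : ℕ∞) (γm m ∘ aff) := by
          refine (hsm m).comp ?_
          exact (contDiff_const.add (contDiff_id.mul contDiff_const)).contMDiff
        have step1 : f (z m s, z m t) ≤ eVariationOn (γm m ∘ aff) (Icc (0:ℝ) 1) := by
          apply sInf_le
          refine ⟨γm m ∘ aff, haffsmooth, ?_, ?_, ?_, rfl⟩
          · show γm m (aff 0) = z m s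
            have : aff 0 = a := by simp [haff]
            rw [this]
          · show γm m (aff 1) = z m t
            have : aff 1 = b := by simp [haff]
            rw [this]
          · intro r hr
            exact hmemm m _ (haffIcc r hr)
        have step2 : eVariationOn (γm m ∘ aff) (Icc (0:ℝ) 1) ≤ eVariationOn (γm m) (Icc a b) := by
          refine eVariationOn.comp_le_of_monotoneOn _ _ ?_ ?_
          · intro r hr r' hr' hrr'
            simp only [haff]
            have : r * (b - a) ≤ r' * (b - a) := mul_le_mul_of_nonneg_right hrr' (by linarith)
            linarith
          · exact haffmem
        have step3 : eVariationOn (γm m) (Icc a b) = ENNReal.ofReal ((t - s) * Vr m) := by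
          rw [ha, hb, key_var m s t hst, hcl_id s hs, hcl_id t ht]
        have step4 : ENNReal.ofReal ((t - s) * Vr m)
            ≤ ENNReal.ofReal (t - s) * (L + ENNReal.ofReal (1 / (m + 1))) := by
          rw [ENNReal.ofReal_mul (by linarith)]
          refine mul_le_mul_right ?_ _
          rw [ENNReal.ofReal_toReal (hvfin m)]
          exact (hvarm m).le
        have step5 : ENNReal.ofReal (t - s) * (L + ENNReal.ofReal (1 / (m + 1)))
            ≤ ENNReal.ofReal (t - s) * L + ε := by
          rw [mul_add]
          refine add_le_add le_rfl ?_
          calc ENNReal.ofReal (t - s) * ENNReal.ofReal (1 / (m + 1))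
              ≤ 1 * (ε : ℝ≥0∞) := by
                refine mul_le_mul' ?_ hm.le
                exact ENNReal.ofReal_le_one.mpr (by linarith [hs.1, ht.2])
            _ = ε := one_mul _
        exact step1.trans (step2.trans (step3.le.trans (step4.trans step5)))
      exact (pairt s t).frequently hev.frequently
    -- exact equality
    have exact_eq : ∀ s t : ℝ, s ∈ Icc (0:ℝ) 1 → t ∈ Icc (0:ℝ) 1 → s ≤ t →
        rhoYM n Y (γ0 s) (γ0 t) = ENNReal.ofReal (t - s) * L := by
      intro s t hs ht hst
      refine le_antisymm (upper s t hs ht hst) ?_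
      have h1 : rhoYM n Y x (γ0 s) ≤ ENNReal.ofReal s * L := by
        have := upper 0 s ⟨le_rfl, zero_le_one⟩ hs hs.1
        rwa [hγ00, sub_zero] at this
      have h2 : rhoYM n Y (γ0 t) y ≤ ENNReal.ofReal (1 - t) * L := by
        have := upper t 1 ht ⟨zero_le_one, le_rfl⟩ ht.2
        rwa [hγ01] at this
      have htr1 : L ≤ rhoYM n Y x (γ0 s) + rhoYM n Y (γ0 s) y := htri x hx _ (hγ0Y s) y hy
      have htr2 : rhoYM n Y (γ0 s) y ≤ rhoYM n Y (γ0 s) (γ0 t) + rhoYM n Y (γ0 t) y :=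
        htri _ (hγ0Y s) _ (hγ0Y t) y hy
      have hub : L ≤ (ENNReal.ofReal s * L + ENNReal.ofReal (1 - t) * L)
          + rhoYM n Y (γ0 s) (γ0 t) := by
        calc L ≤ rhoYM n Y x (γ0 s) + (rhoYM n Y (γ0 s) (γ0 t) + rhoYM n Y (γ0 t) y) :=
              htr1.trans (add_le_add_right htr2 _)
          _ ≤ ENNReal.ofReal s * L + (rhoYM n Y (γ0 s) (γ0 t) + ENNReal.ofReal (1 - t) * L) :=
              add_le_add h1 (add_le_add_right h2 _)
          _ = (ENNReal.ofReal s * L + ENNReal.ofReal (1 - t) * L)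
              + rhoYM n Y (γ0 s) (γ0 t) := by
              rw [add_comm (rhoYM n Y (γ0 s) (γ0 t)) (ENNReal.ofReal (1 - t) * L), ← add_assoc]
      have hC : (ENNReal.ofReal s * L + ENNReal.ofReal (1 - t) * L) ≠ ⊤ :=
        ENNReal.add_ne_top.mpr
          ⟨ENNReal.mul_ne_top ENNReal.ofReal_ne_top hLfin,
           ENNReal.mul_ne_top ENNReal.ofReal_ne_top hLfin⟩
      have hsplit : (ENNReal.ofReal s * L + ENNReal.ofReal (1 - t) * L)
          + ENNReal.ofReal (t - s) * L = L := by
        rw [← add_mul, ← add_mul, ← ENNReal.ofReal_add hs.1 (by linarith [ht.2]),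
          ← ENNReal.ofReal_add (by linarith [ht.2, hs.1]) (by linarith)]
        have : s + (1 - t) + (t - s) = 1 := by ring
        rw [this, ENNReal.ofReal_one, one_mul]
      exact (ENNReal.add_le_add_iff_left hC).mp (by rw [hsplit]; exact hub)
    -- edist bound
    have hedist : ∀ s t : ℝ, edist (γ0 s) (γ0 t) ≤ rhoYM n Y (γ0 s) (γ0 t) := by
      intro s t
      rw [hrho_eq]
      haveI hne1 : ((𝓝 (γ0 s) ⊓ 𝓟 I) ×ˢ (𝓝 (γ0 t) ⊓ 𝓟 I)).NeBot :=
        Filter.neBot_of_le (pairt s t)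
      have h2 : Tendsto (fun p : X × X => edist p.1 p.2)
          ((𝓝 (γ0 s) ⊓ 𝓟 I) ×ˢ (𝓝 (γ0 t) ⊓ 𝓟 I)) (𝓝 (edist (γ0 s) (γ0 t))) := by
        have h3 : ((𝓝 (γ0 s) ⊓ 𝓟 I) ×ˢ (𝓝 (γ0 t) ⊓ 𝓟 I)) ≤ 𝓝 ((γ0 s, γ0 t)) := by
          rw [nhds_prod_eq]
          exact Filter.prod_mono inf_le_left inf_le_left
        exact (continuous_edist.tendsto _).mono_left h3
      have hptwise : ∀ p : X × X, edist p.1 p.2 ≤ f p := by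
        rintro ⟨p1, p2⟩
        refine le_sInf ?_
        rintro Lc ⟨γ, -, hg0, hg1, -, rfl⟩
        rw [← hg0, ← hg1]
        exact eVariationOn.edist_le γ (s := Icc (0:ℝ) 1)
          ⟨le_rfl, zero_le_one⟩ ⟨zero_le_one, le_rfl⟩
      calc edist (γ0 s) (γ0 t)
          = Filter.liminf (fun p : X × X => edist p.1 p.2)
              ((𝓝 (γ0 s) ⊓ 𝓟 I) ×ˢ (𝓝 (γ0 t) ⊓ 𝓟 I)) := h2.liminf_eq.symm
        _ ≤ Filter.liminf f ((𝓝 (γ0 s) ⊓ 𝓟 I) ×ˢ (𝓝 (γ0 t) ⊓ 𝓟 I)) :=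
            Filter.liminf_le_liminf (Filter.Eventually.of_forall hptwise)
    -- assembly
    have hdivmem : ∀ u : ℝ, u ∈ Icc 0 Lr → u / Lr ∈ Icc (0:ℝ) 1 := by
      intro u hu
      exact ⟨div_nonneg hu.1 hLrpos.le, (div_le_one hLrpos).mpr hu.2⟩
    have keylip : ∀ u v : ℝ, u ∈ Icc 0 Lr → v ∈ Icc 0 Lr → u ≤ v →
        edist (γ0 (u / Lr)) (γ0 (v / Lr)) ≤ ENNReal.ofReal (v - u) := by
      intro u v hu hv huv
      have hss : u / Lr ≤ v / Lr := by gcongr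
      calc edist (γ0 (u / Lr)) (γ0 (v / Lr))
          ≤ rhoYM n Y (γ0 (u / Lr)) (γ0 (v / Lr)) := hedist _ _
        _ = ENNReal.ofReal (v / Lr - u / Lr) * L :=
            exact_eq _ _ (hdivmem u hu) (hdivmem v hv) hss
        _ = ENNReal.ofReal ((v - u) / Lr) * ENNReal.ofReal Lr := by
            rw [← sub_div, hLofReal]
        _ = ENNReal.ofReal ((v - u) / Lr * Lr) :=
            (ENNReal.ofReal_mul (div_nonneg (by linarith) hLrpos.le)).symm
        _ = ENNReal.ofReal (v - u) := by rw [div_mul_cancel₀ _ hLrpos.ne']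
    refine ⟨fun u => γ0 (u / Lr), ?_, ?_, ?_, ?_, ?_⟩
    · -- continuity
      have hlip : LipschitzOnWith 1 (fun u => γ0 (u / Lr)) (Icc 0 Lr) := by
        intro u hu v hv
        rcases le_total u v with h | h
        · calc edist (γ0 (u / Lr)) (γ0 (v / Lr)) ≤ ENNReal.ofReal (v - u) := keylip u v hu hv h
            _ ≤ 1 * edist u v := by
                rw [one_mul, edist_dist, Real.dist_eq, abs_of_nonpos (by linarith), neg_sub]
        · calc edist (γ0 (u / Lr)) (γ0 (v / Lr))
              = edist (γ0 (v / Lr)) (γ0 (u / Lr)) := edist_comm _ _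
            _ ≤ ENNReal.ofReal (u - v) := keylip v u hv hu h
            _ ≤ 1 * edist u v := by
                rw [one_mul, edist_dist, Real.dist_eq, abs_of_nonneg (by linarith)]
      exact hlip.continuousOn
    · exact fun t ht => hγ0Y _
    · show γ0 (0 / Lr) = x
      rw [zero_div, hγ00]
    · show γ0 (Lr / Lr) = y
      rw [div_self hLrpos.ne', hγ01]
    · intro s t hs hst ht
      have hsm' : s / Lr ∈ Icc (0:ℝ) 1 := hdivmem s ⟨hs, by linarith⟩
      have htm' : t / Lr ∈ Icc (0:ℝ) 1 := hdivmem t ⟨by linarith, ht⟩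
      have hss : s / Lr ≤ t / Lr := by gcongr
      calc rhoYM n Y (γ0 (s / Lr)) (γ0 (t / Lr))
          = ENNReal.ofReal (t / Lr - s / Lr) * L := exact_eq _ _ hsm' htm' hss
        _ = ENNReal.ofReal ((t - s) / Lr) * ENNReal.ofReal Lr := by rw [← sub_div, hLofReal]
        _ = ENNReal.ofReal ((t - s) / Lr * Lr) :=
            (ENNReal.ofReal_mul (div_nonneg (by linarith) hLrpos.le)).symm
        _ = ENNReal.ofReal (t - s) := by rw [div_mul_cancel₀ _ hLrpos.ne']
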